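/- For any multigraph G, there is a bijection between derivations rooted at a sort S (i.e., nullary multimorphisms into S in the free multicategory on G) and morphisms from S^L to S^R in the free strict monoidal category over the optical contour polygraph of G. -/

import Mathlib

/-- A multi-sorted polygraph. -/
structure Polygraph where
  S : Type
  Gen : List S → List S → Type

/-- String diagrams (morphisms of the free strict monoidal category) over a polygraph. -/
inductive MDiag (P : Polygraph) : List P.S → List P.S → Type
  | id (X : List P.S) : MDiag P X X
  | gen {A B : List P.S} (f : P.Gen A B) : MDiag P A B
  | comp {A B C : List P.S} : MDiag P A B → MDiag P B C → MDiag P A C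
  | tensor {A B A' B' : List P.S} : MDiag P A B → MDiag P A' B' → MDiag P (A ++ A') (B ++ B')

def MDiag.castD {P : Polygraph} {A B A' B' : List P.S} (h1 : A = A') (h2 : B = B')
    (d : MDiag P A B) : MDiag P A' B' := by subst h1; subst h2; exact d

/-- The strict monoidal equations between string diagrams over a polygraph. -/
inductive MEq (P : Polygraph) : ∀ {A B : List P.S}, MDiag P A B → MDiag P A B → Prop
  | refl {A B} (d : MDiag P A B) : MEq P d d
  | symm {A B} {d e : MDiag P A B} : MEq P d e → MEq P e d
  | trans {A B} {d e f : MDiag P A B} : MEq P d e → MEq P e f → MEq P d f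
  | comp_congr {A B C} {a a' : MDiag P A B} {b b' : MDiag P B C} :
      MEq P a a' → MEq P b b' → MEq P (a.comp b) (a'.comp b')
  | tensor_congr {A B A' B'} {a a' : MDiag P A B} {b b' : MDiag P A' B'} :
      MEq P a a' → MEq P b b' → MEq P (a.tensor b) (a'.tensor b')
  | comp_assoc {A B C D} (a : MDiag P A B) (b : MDiag P B C) (c : MDiag P C D) :
      MEq P ((a.comp b).comp c) (a.comp (b.comp c))
  | id_comp {A B} (a : MDiag P A B) : MEq P ((MDiag.id A).comp a) a
  | comp_id {A B} (a : MDiag P A B) : MEq P (a.comp (.id B)) a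
  | tensor_assoc {A B C D E F} (a : MDiag P A B) (b : MDiag P C D) (c : MDiag P E F) :
      MEq P (((a.tensor b).tensor c).castD (List.append_assoc A C E) (List.append_assoc B D F))
        (a.tensor (b.tensor c))
  | tensor_nil_left {A B} (a : MDiag P A B) : MEq P ((MDiag.id []).tensor a) a
  | tensor_nil_right {A B} (a : MDiag P A B) :
      MEq P ((a.tensor (.id [])).castD (List.append_nil A) (List.append_nil B)) a
  | id_tensor_id (X Y : List P.S) : MEq P ((MDiag.id X).tensor (.id Y)) (.id (X ++ Y))
  | interchange {A B C A' B' C'} (a : MDiag P A B) (b : MDiag P B C)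
      (c : MDiag P A' B') (d : MDiag P B' C') :
      MEq P ((a.comp b).tensor (c.comp d)) ((a.tensor c).comp (b.tensor d))

/-- Hom-sets of the free strict monoidal category over a polygraph:
string diagrams modulo the strict monoidal equations. -/
def FHom (P : Polygraph) (A B : List P.S) := Quot (@MEq P A B)

/-- A multigraph: a set of sorts and sets of operations with a list of sources and a
single target. -/
structure Mgraph where
  V : Type
  Op : List V → V → Type

mutual
/-- Derivations: closed trees of the free multicategory on a multigraph, rooted at a
sort. -/
inductive MDeriv (G : Mgraph) : G.V → Type
  | node {l : List G.V} {Y : G.V} (g : G.Op l Y) (ds : MDerivList G l) : MDeriv G Y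
inductive MDerivList (G : Mgraph) : List G.V → Type
  | nil : MDerivList G []
  | cons {v : G.V} {l : List G.V} : MDeriv G v → MDerivList G l → MDerivList G (v :: l)
end

/-- Sorts of the optical contour polygraph: left and right polarized sorts `X^L`,
`X^R` for each sort `X`, and sorts `Mᵢ^g` (`Bool` value `false`) and `Nᵢ^g` (`true`)
for each operation `g` and index `i`. -/
def CSort (G : Mgraph) : Type :=
  (G.V × Bool) ⊕ (((l : List G.V) × (Y : G.V) × G.Op l Y) × ℕ × Bool)

/-- Source list of the `i`-th sector of the contour of an operation. -/
def csrc {G : Mgraph} (o : (l : List G.V) × (Y : G.V) × G.Op l Y)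
    (i : Fin (o.1.length + 1)) : List (CSort G) :=
  if h : (i : ℕ) = 0 then [Sum.inl (o.2.1, false)]
  else [Sum.inr (o, (i : ℕ), false),
        Sum.inl (o.1.get ⟨(i : ℕ) - 1, by omega⟩, true),
        Sum.inr (o, (i : ℕ), true)]

/-- Target list of the `i`-th sector of the contour of an operation. -/
def ctgt {G : Mgraph} (o : (l : List G.V) × (Y : G.V) × G.Op l Y)
    (i : Fin (o.1.length + 1)) : List (CSort G) :=
  if h : (i : ℕ) = o.1.length then [Sum.inl (o.2.1, true)]
  else [Sum.inr (o, (i : ℕ) + 1, false),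
        Sum.inl (o.1.get ⟨(i : ℕ), by omega⟩, false),
        Sum.inr (o, (i : ℕ) + 1, true)]

/-- The optical contour polygraph of a multigraph: each operation `g` of arity `n`
contributes `n + 1` generators, its sectors. -/
def ContourPoly (G : Mgraph) : Polygraph where
  S := CSort G
  Gen A B := Σ' (o : (l : List G.V) × (Y : G.V) × G.Op l Y) (i : Fin (o.1.length + 1)),
    A = csrc o i ∧ B = ctgt o i

namespace ContourProof

open MDiag

variable {P : Polygraph}

/-- Heterogeneous version of `MEq`, for diagrams with propositionally equal boundaries. -/
def MEqC {A B A' B' : List P.S} (d : MDiag P A B) (e : MDiag P A' B') : Prop :=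
  ∃ (h1 : A = A') (h2 : B = B'), MEq P (d.castD h1 h2) e

theorem MEqC.of_meq {A B} {d e : MDiag P A B} (h : MEq P d e) : MEqC d e :=
  ⟨rfl, rfl, h⟩

theorem MEqC.refl {A B} (d : MDiag P A B) : MEqC d d := ⟨rfl, rfl, MEq.refl d⟩

theorem MEqC.to_meq {A B} {d e : MDiag P A B} (h : MEqC d e) : MEq P d e := by
  obtain ⟨h1, h2, m⟩ := h
  exact m

theorem MEqC.symm {A B A' B'} {d : MDiag P A B} {e : MDiag P A' B'}
    (h : MEqC d e) : MEqC e d := by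
  obtain ⟨h1, h2, m⟩ := h
  subst h1; subst h2
  exact ⟨rfl, rfl, MEq.symm m⟩

theorem MEqC.trans {A₁ B₁ A₂ B₂ A₃ B₃} {d : MDiag P A₁ B₁} {e : MDiag P A₂ B₂}
    {f : MDiag P A₃ B₃} (h : MEqC d e) (h' : MEqC e f) : MEqC d f := by
  obtain ⟨h1, h2, m⟩ := h
  obtain ⟨h1', h2', m'⟩ := h'
  subst h1; subst h2; subst h1'; subst h2'
  exact ⟨rfl, rfl, MEq.trans m m'⟩

theorem MEqC.cast_left {A B A' B'} (h1 : A = A') (h2 : B = B') (d : MDiag P A B) :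
    MEqC (d.castD h1 h2) d := by
  subst h1; subst h2; exact MEqC.refl d

theorem MEqC.cast_right {A B A' B'} (h1 : A = A') (h2 : B = B') (d : MDiag P A B) :
    MEqC d (d.castD h1 h2) := (MEqC.cast_left h1 h2 d).symm

theorem MEqC.comp {A B C A' B' C'} {a : MDiag P A B} {b : MDiag P B C}
    {a' : MDiag P A' B'} {b' : MDiag P B' C'} (ha : MEqC a a') (hb : MEqC b b') :
    MEqC (a.comp b) (a'.comp b') := by
  obtain ⟨h1, h2, m⟩ := ha
  subst h1; subst h2
  obtain ⟨h1', h2', m'⟩ := hb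
  subst h2'
  have h1'' : B = B := h1'
  exact ⟨rfl, rfl, MEq.comp_congr m m'⟩

theorem MEqC.tensor {A B C D A' B' C' D'} {a : MDiag P A B} {b : MDiag P C D}
    {a' : MDiag P A' B'} {b' : MDiag P C' D'} (ha : MEqC a a') (hb : MEqC b b') :
    MEqC (a.tensor b) (a'.tensor b') := by
  obtain ⟨h1, h2, m⟩ := ha
  subst h1; subst h2
  obtain ⟨h1', h2', m'⟩ := hb
  subst h1'; subst h2'
  exact ⟨rfl, rfl, MEq.tensor_congr m m'⟩

theorem MEqC.comp_assoc {A B C D} (a : MDiag P A B) (b : MDiag P B C) (c : MDiag P C D) :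
    MEqC ((a.comp b).comp c) (a.comp (b.comp c)) := .of_meq (MEq.comp_assoc a b c)

theorem MEqC.id_comp {A B} (a : MDiag P A B) : MEqC ((MDiag.id A).comp a) a :=
  .of_meq (MEq.id_comp a)

theorem MEqC.comp_id {A B} (a : MDiag P A B) : MEqC (a.comp (.id B)) a :=
  .of_meq (MEq.comp_id a)

theorem MEqC.tensor_assoc {A B C D E F} (a : MDiag P A B) (b : MDiag P C D)
    (c : MDiag P E F) : MEqC ((a.tensor b).tensor c) (a.tensor (b.tensor c)) :=
  ⟨List.append_assoc A C E, List.append_assoc B D F, MEq.tensor_assoc a b c⟩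

theorem MEqC.tensor_nil_left {A B} (a : MDiag P A B) : MEqC ((MDiag.id []).tensor a) a :=
  .of_meq (MEq.tensor_nil_left a)

theorem MEqC.tensor_nil_right {A B} (a : MDiag P A B) : MEqC (a.tensor (.id [])) a :=
  ⟨List.append_nil A, List.append_nil B, MEq.tensor_nil_right a⟩

theorem MEqC.id_tensor_id (X Y : List P.S) :
    MEqC ((MDiag.id (P := P) X).tensor (.id Y)) (.id (X ++ Y)) :=
  .of_meq (MEq.id_tensor_id X Y)

theorem MEqC.interchange {A B C A' B' C'} (a : MDiag P A B) (b : MDiag P B C)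
    (c : MDiag P A' B') (d : MDiag P B' C') :
    MEqC ((a.comp b).tensor (c.comp d)) ((a.tensor c).comp (b.tensor d)) :=
  .of_meq (MEq.interchange a b c d)

theorem MEqC.comp_cast_id {A B B'} (h1 : B = B') (a : MDiag P A B') :
    MEqC (a.comp ((MDiag.id B).castD h1 rfl)) a := by
  subst h1; exact MEqC.comp_id a

/-- `a ⊗ b ~ (a ⊗ id) ⨾ (id ⊗ b)`. -/
theorem MEqC.tensor_split {A B A' B'} (a : MDiag P A B) (b : MDiag P A' B') :
    MEqC (a.tensor b) ((a.tensor (.id A')).comp ((MDiag.id B).tensor b)) := by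
  have h1 : MEqC a (a.comp (.id B)) := (MEqC.comp_id a).symm
  have h2 : MEqC b ((MDiag.id A').comp b) := (MEqC.id_comp b).symm
  exact (MEqC.tensor h1 h2).trans (MEqC.interchange a (.id B) (.id A') b)


variable {P : Polygraph}

/-- A single generator whiskered by identities. -/
def layer (L R : List P.S) {A' B' : List P.S} (f : P.Gen A' B') :
    MDiag P (L ++ A' ++ R) (L ++ B' ++ R) :=
  ((MDiag.id L).tensor ((MDiag.gen f).tensor (MDiag.id R))).castD
    (List.append_assoc L A' R).symm (List.append_assoc L B' R).symm

theorem layer_eqc {A' B' : List P.S} (L R : List P.S) (f : P.Gen A' B') :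
    MEqC (layer L R f) ((MDiag.id L).tensor ((MDiag.gen f).tensor (MDiag.id R))) :=
  MEqC.cast_left _ _ _

/-- Sequential diagrams: composites of whiskered generators. -/
inductive Seq (P : Polygraph) : List P.S → List P.S → Type
  | nil (A : List P.S) : Seq P A A
  | cons {A' B' C : List P.S} (L R : List P.S) (f : P.Gen A' B')
      (rest : Seq P (L ++ B' ++ R) C) : Seq P (L ++ A' ++ R) C

def Seq.length {A B : List P.S} : Seq P A B → ℕ
  | .nil _ => 0
  | .cons _ _ _ rest => rest.length + 1

def Seq.toDiag {A B : List P.S} : Seq P A B → MDiag P A B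
  | .nil _ => .id A
  | .cons L R f rest => (layer L R f).comp rest.toDiag

def Seq.castS {A B A₂ : List P.S} (h : A = A₂) (s : Seq P A B) : Seq P A₂ B := h ▸ s

@[simp] theorem Seq.length_castS {A B A₂ : List P.S} (h : A = A₂) (s : Seq P A B) :
    (s.castS h).length = s.length := by subst h; rfl

theorem Seq.toDiag_castS {A B A₂ : List P.S} (h : A = A₂) (s : Seq P A B) :
    MEqC (s.castS h).toDiag s.toDiag := by subst h; exact MEqC.refl _

def Seq.append {A B C : List P.S} : Seq P A B → Seq P B C → Seq P A C
  | .nil _, t => t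
  | .cons L R f rest, t => .cons L R f (rest.append t)

theorem Seq.toDiag_append {A B C : List P.S} (s : Seq P A B) (t : Seq P B C) :
    MEqC (s.append t).toDiag (s.toDiag.comp t.toDiag) := by
  induction s with
  | nil A => exact (MEqC.id_comp t.toDiag).symm
  | cons L R f rest ih =>
    exact (MEqC.comp (MEqC.refl (layer L R f)) (ih t)).trans
      ((MEqC.comp_assoc _ _ _).symm)

def Seq.whiskR {A B : List P.S} (E : List P.S) : Seq P A B → Seq P (A ++ E) (B ++ E)
  | .nil _ => .nil _
  | .cons (A' := A') (B' := B') L R f rest =>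
      Seq.castS (by simp) (.cons L (R ++ E) f (Seq.castS (by simp) (rest.whiskR E)))

def Seq.whiskL {A B : List P.S} (E : List P.S) : Seq P A B → Seq P (E ++ A) (E ++ B)
  | .nil _ => .nil _
  | .cons (A' := A') (B' := B') L R f rest =>
      Seq.castS (by simp) (.cons (E ++ L) R f (Seq.castS (by simp) (rest.whiskL E)))

/-- `layer L R f` whiskered on the right. -/
theorem layer_whiskR {A' B' : List P.S} (L R E : List P.S) (f : P.Gen A' B') :
    MEqC (layer L (R ++ E) f) ((layer L R f).tensor (.id E)) := by
  refine (layer_eqc L (R ++ E) f).trans (MEqC.trans ?_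
    (MEqC.tensor (layer_eqc L R f).symm (MEqC.refl (MDiag.id E))))
  refine MEqC.trans ?_ (MEqC.tensor_assoc (MDiag.id L)
    ((MDiag.gen f).tensor (MDiag.id R)) (MDiag.id E)).symm
  refine MEqC.tensor (MEqC.refl _) ?_
  refine MEqC.trans ?_ (MEqC.tensor_assoc (MDiag.gen f) (MDiag.id R) (MDiag.id E)).symm
  exact MEqC.tensor (MEqC.refl _) (MEqC.id_tensor_id R E).symm

theorem layer_whiskL {A' B' : List P.S} (L R E : List P.S) (f : P.Gen A' B') :
    MEqC (layer (E ++ L) R f) ((MDiag.id E).tensor (layer L R f)) := by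
  refine (layer_eqc (E ++ L) R f).trans (MEqC.trans ?_
    (MEqC.tensor (MEqC.refl (MDiag.id E)) (layer_eqc L R f).symm))
  refine MEqC.trans ?_ (MEqC.tensor_assoc (MDiag.id E) (MDiag.id L)
    ((MDiag.gen f).tensor (MDiag.id R)))
  exact MEqC.tensor (MEqC.id_tensor_id E L).symm (MEqC.refl _)

theorem Seq.toDiag_whiskR {A B : List P.S} (E : List P.S) (s : Seq P A B) :
    MEqC (s.whiskR E).toDiag (s.toDiag.tensor (.id E)) := by
  induction s with
  | nil A => exact (MEqC.id_tensor_id A E).symm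
  | cons L R f rest ih =>
    refine MEqC.trans (Seq.toDiag_castS _ _) ?_
    show MEqC ((layer L (R ++ E) f).comp (Seq.castS _ (rest.whiskR E)).toDiag) _
    refine MEqC.trans (MEqC.comp (layer_whiskR L R E f)
      ((Seq.toDiag_castS _ _).trans ih)) ?_
    refine MEqC.trans (MEqC.interchange _ _ _ _).symm ?_
    exact MEqC.tensor (MEqC.refl _) (MEqC.id_comp _)

theorem Seq.toDiag_whiskL {A B : List P.S} (E : List P.S) (s : Seq P A B) :
    MEqC (s.whiskL E).toDiag ((MDiag.id E).tensor s.toDiag) := by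
  induction s with
  | nil A => exact (MEqC.id_tensor_id E A).symm
  | cons L R f rest ih =>
    refine MEqC.trans (Seq.toDiag_castS _ _) ?_
    show MEqC ((layer (E ++ L) R f).comp (Seq.castS _ (rest.whiskL E)).toDiag) _
    refine MEqC.trans (MEqC.comp (layer_whiskL L R E f)
      ((Seq.toDiag_castS _ _).trans ih)) ?_
    refine MEqC.trans (MEqC.interchange _ _ _ _).symm ?_
    exact MEqC.tensor (MEqC.id_comp _) (MEqC.refl _)

/-- Case analysis on a sequence, stated without dependent elimination on indices. -/
theorem Seq.cases_eq {A C : List P.S} (s : Seq P A C) :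
    (A = C ∧ s.length = 0 ∧ MEqC s.toDiag (MDiag.id A)) ∨
    (∃ (A' B' L R : List P.S) (f : P.Gen A' B') (rest : Seq P (L ++ B' ++ R) C),
      A = L ++ A' ++ R ∧ s.length = rest.length + 1 ∧
      MEqC s.toDiag ((layer L R f).comp rest.toDiag)) := by
  cases s with
  | nil A => exact Or.inl ⟨rfl, rfl, MEqC.refl _⟩
  | cons L R f rest => exact Or.inr ⟨_, _, L, R, f, rest, rfl, rfl, MEqC.refl _⟩

/-- Sequentialization: every diagram is equal to a sequential one. -/
theorem sequentialize {A B : List P.S} (d : MDiag P A B) :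
    ∃ s : Seq P A B, MEq P d s.toDiag := by
  induction d with
  | id A => exact ⟨.nil A, MEq.refl _⟩
  | gen f =>
    rename_i A B
    have h1 : [] ++ A ++ [] = A := by simp
    have h2 : B = [] ++ B ++ [] := by simp
    refine ⟨Seq.castS h1 (.cons [] [] f (Seq.castS h2 (.nil B))), MEqC.to_meq ?_⟩
    have c1 : MEqC (Seq.castS h1 (Seq.cons [] [] f (Seq.castS h2 (Seq.nil B)))).toDiag
        ((layer [] [] f).comp (Seq.castS h2 (Seq.nil B)).toDiag) :=
      Seq.toDiag_castS h1 _
    have c2 : MEqC (layer ([] : List P.S) [] f) (MDiag.gen f) :=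
      (layer_eqc [] [] f).trans
        ((MEqC.tensor_nil_left _).trans (MEqC.tensor_nil_right _))
    have c3 : MEqC (Seq.castS h2 (Seq.nil B)).toDiag (MDiag.id B) :=
      Seq.toDiag_castS h2 (Seq.nil B)
    exact ((MEqC.comp_id (MDiag.gen f)).symm.trans
      (MEqC.comp c2.symm c3.symm)).trans c1.symm
  | comp a b iha ihb =>
    obtain ⟨s, hs⟩ := iha
    obtain ⟨t, ht⟩ := ihb
    exact ⟨s.append t, MEqC.to_meq ((MEqC.of_meq (MEq.comp_congr hs ht)).trans
      (Seq.toDiag_append s t).symm)⟩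
  | tensor a b iha ihb =>
    obtain ⟨s, hs⟩ := iha
    obtain ⟨t, ht⟩ := ihb
    rename_i A₁ B₁ A₂ B₂ -- boundaries
    refine ⟨(s.whiskR A₂).append (t.whiskL B₁), MEqC.to_meq ?_⟩
    refine MEqC.trans (MEqC.tensor (MEqC.of_meq hs) (MEqC.of_meq ht)) ?_
    refine MEqC.trans (MEqC.tensor_split _ _) ?_
    refine MEqC.trans (MEqC.comp (Seq.toDiag_whiskR A₂ s).symm
      (Seq.toDiag_whiskL B₁ t).symm) ?_
    exact (Seq.toDiag_append _ _).symm


variable {G : Mgraph}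

/-- Operations of a multigraph, bundled. -/
abbrev Opn (G : Mgraph) := (l : List G.V) × (Y : G.V) × G.Op l Y

/-- Polarized sort `Xᵇ`. -/
def LS (X : G.V) (b : Bool) : CSort G := Sum.inl (X, b)
/-- The sort `Mᵢ`. -/
def MS (o : Opn G) (i : ℕ) : CSort G := Sum.inr (o, i, false)
/-- The sort `Nᵢ`. -/
def NS (o : Opn G) (i : ℕ) : CSort G := Sum.inr (o, i, true)

theorem csrc_zero (o : Opn G) (h : 0 < o.1.length + 1) :
    csrc o ⟨0, h⟩ = [LS o.2.1 false] := by simp [csrc, LS]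

theorem csrc_pos (o : Opn G) (i : ℕ) (h0 : i ≠ 0) (hi : i < o.1.length + 1) :
    csrc o ⟨i, hi⟩ = [MS o i, LS (o.1.get ⟨i - 1, by omega⟩) true, NS o i] := by
  simp [csrc, h0, LS, MS, NS]

theorem ctgt_last (o : Opn G) (i : ℕ) (hn : i = o.1.length) (hi : i < o.1.length + 1) :
    ctgt o ⟨i, hi⟩ = [LS o.2.1 true] := by simp [ctgt, hn, LS]

theorem ctgt_lt (o : Opn G) (i : ℕ) (hn : i < o.1.length) (hi : i < o.1.length + 1) :
    ctgt o ⟨i, hi⟩ = [MS o (i + 1), LS (o.1.get ⟨i, hn⟩) false, NS o (i + 1)] := by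
  simp [ctgt, Nat.ne_of_lt hn, LS, MS, NS]

/-- The `i`-th sector generator of the contour of `o`. -/
def gsec (o : Opn G) (i : ℕ) (hi : i ≤ o.1.length) :
    (ContourPoly G).Gen (csrc o ⟨i, Nat.lt_succ_of_le hi⟩)
      (ctgt o ⟨i, Nat.lt_succ_of_le hi⟩) :=
  ⟨o, ⟨i, Nat.lt_succ_of_le hi⟩, rfl, rfl⟩

mutual
/-- The contour diagram of a derivation. -/
def CD {X : G.V} : MDeriv G X → MDiag (ContourPoly G) [LS X false] [LS X true]
  | .node (l := l) (Y := Y) g ds =>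
      (go ⟨l, Y, g⟩ 0 (Nat.zero_le _) ds rfl).castD (csrc_zero ⟨l, Y, g⟩ (by omega)) rfl
termination_by d => sizeOf d

/-- The contour diagram processing the remaining sources `rem` of operation `o`,
starting by firing sector `i`. -/
def go (o : Opn G) (i : ℕ) (hi : i ≤ o.1.length) : {rem : List G.V} →
    (ds : MDerivList G rem) → (h : o.1.drop i = rem) →
    MDiag (ContourPoly G) (csrc o ⟨i, Nat.lt_succ_of_le hi⟩) [LS o.2.1 true]
  | _, .nil, h =>
      (MDiag.gen (gsec o i hi)).comp ((MDiag.id (P := ContourPoly G) [LS o.2.1 true]).castD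
        (ctgt_last o i (by have := List.drop_eq_nil_iff.mp h; omega) _).symm rfl)
  | _, .cons (v := v) (l := rem') d ds', h =>
      have hlt : i < o.1.length := by
        by_contra hc
        rw [List.drop_eq_nil_of_le (by omega)] at h
        exact (List.cons_ne_nil v rem') h.symm
      have hd : o.1[i] :: o.1.drop (i + 1) = v :: rem' :=
        (List.drop_eq_getElem_cons hlt).symm.trans h
      have hv : o.1.get ⟨i, hlt⟩ = v := by
        rw [List.get_eq_getElem]; exact (List.cons.injEq _ _ _ _ ▸ hd).1
      have h' : o.1.drop (i + 1) = rem' := (List.cons.injEq _ _ _ _ ▸ hd).2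
      (MDiag.gen (gsec o i hi)).comp
        (((((MDiag.id [MS o (i + 1)]).tensor
            ((CD d).tensor (MDiag.id [NS o (i + 1)]))).castD
              (by rw [ctgt_lt o i hlt, hv]; rfl)
              (by rw [csrc_pos o (i + 1) (by omega) (by omega)]
                  simp only [Nat.add_sub_cancel]
                  rw [hv]; rfl)).comp
          (go o (i + 1) hlt ds' h')))
termination_by rem ds h => sizeOf ds
end


variable {G : Mgraph}

/-- Stacks of partially traversed operations (innermost frame first). -/
inductive VStack (G : Mgraph) (S : G.V) : G.V → Type
  | nil : VStack G S S
  | cons (o : Opn G) (i : ℕ) (hi : i < o.1.length) {X : G.V}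
      (hX : o.1.get ⟨i, hi⟩ = X) (st : VStack G S o.2.1) : VStack G S X

variable {S : G.V}

def Msl : {X : G.V} → VStack G S X → List (CSort G)
  | _, .nil => []
  | _, .cons o i _ _ st => Msl st ++ [MS o (i + 1)]

def Nsl : {X : G.V} → VStack G S X → List (CSort G)
  | _, .nil => []
  | _, .cons o i _ _ st => NS o (i + 1) :: Nsl st

theorem Msl_inr {X : G.V} (st : VStack G S X) : ∀ x ∈ Msl st, ∃ y, x = Sum.inr y := by
  induction st with
  | nil => simp [Msl]
  | cons o i hi hX st ih =>
    intro x hx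
    rw [Msl, List.mem_append] at hx
    rcases hx with hx | hx
    · exact ih x hx
    · simp [MS] at hx; exact ⟨_, List.mem_singleton.mp hx⟩

theorem Nsl_inr {X : G.V} (st : VStack G S X) : ∀ x ∈ Nsl st, ∃ y, x = Sum.inr y := by
  induction st with
  | nil => simp [Nsl]
  | cons o i hi hX st ih =>
    intro x hx
    rw [Nsl, List.mem_cons] at hx
    rcases hx with hx | hx
    · exact ⟨_, by rw [hx]; rfl⟩
    · exact ih x hx

/-- The cut word of a stack with focus of the given polarity. -/
def word (st : VStack G S X) (b : Bool) : List (CSort G) :=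
  Msl st ++ [LS X b] ++ Nsl st

/-- Whiskering a diagram by the stack context. -/
def whisker (st : VStack G S X) {A B : List (CSort G)} (d : MDiag (ContourPoly G) A B) :
    MDiag (ContourPoly G) (Msl st ++ A ++ Nsl st) (Msl st ++ B ++ Nsl st) :=
  ((MDiag.id (Msl st)).tensor (d.tensor (MDiag.id (Nsl st)))).castD
    (List.append_assoc _ _ _).symm (List.append_assoc _ _ _).symm

theorem whisker_eqc (st : VStack G S X) {A B : List (CSort G)}
    (d : MDiag (ContourPoly G) A B) :
    MEqC (whisker st d) ((MDiag.id (Msl st)).tensor (d.tensor (MDiag.id (Nsl st)))) :=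
  MEqC.cast_left _ _ _

theorem whisker_congr (st : VStack G S X) {A B A' B' : List (CSort G)}
    {d : MDiag (ContourPoly G) A B} {e : MDiag (ContourPoly G) A' B'}
    (h : MEqC d e) : MEqC (whisker st d) (whisker st e) :=
  ((whisker_eqc st d).trans
    (MEqC.tensor (MEqC.refl _) (MEqC.tensor h (MEqC.refl _)))).trans
    (whisker_eqc st e).symm

theorem whisker_comp (st : VStack G S X) {A B C : List (CSort G)}
    (a : MDiag (ContourPoly G) A B) (b : MDiag (ContourPoly G) B C) :
    MEqC (whisker st (a.comp b)) ((whisker st a).comp (whisker st b)) := by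
  refine (whisker_eqc st _).trans (MEqC.trans ?_
    (MEqC.comp (whisker_eqc st a).symm (whisker_eqc st b).symm))
  refine MEqC.trans (MEqC.tensor
    (MEqC.comp_id (MDiag.id (P := ContourPoly G) (Msl st))).symm
    (MEqC.tensor (MEqC.refl _)
      (MEqC.comp_id (MDiag.id (P := ContourPoly G) (Nsl st))).symm)) ?_
  refine MEqC.trans (MEqC.tensor (MEqC.refl _) (MEqC.interchange a b _ _)) ?_
  exact MEqC.interchange _ _ _ _

/-- Whiskering the innermost frame explicitly. -/
theorem whisker_cons (o : Opn G) (i : ℕ) (hi : i < o.1.length) {X : G.V}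
    (hX : o.1.get ⟨i, hi⟩ = X) (st : VStack G S o.2.1) {A B : List (CSort G)}
    (d : MDiag (ContourPoly G) A B) :
    MEqC (whisker (VStack.cons o i hi hX st) d)
      (whisker st ((MDiag.id [MS o (i + 1)]).tensor
        (d.tensor (MDiag.id [NS o (i + 1)])))) := by
  refine (whisker_eqc _ d).trans (MEqC.trans ?_ (whisker_eqc st _).symm)
  show MEqC ((MDiag.id (Msl st ++ [MS o (i + 1)])).tensor
    (d.tensor (MDiag.id (NS o (i + 1) :: Nsl st)))) _
  have e1 : MEqC (MDiag.id (P := ContourPoly G) (Msl st ++ [MS o (i + 1)]))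
      ((MDiag.id (Msl st)).tensor (MDiag.id [MS o (i + 1)])) :=
    by exact (MEqC.id_tensor_id (P := ContourPoly G) (Msl st) [MS o (i + 1)]).symm
  have e2 : MEqC (MDiag.id (P := ContourPoly G) (NS o (i + 1) :: Nsl st))
      ((MDiag.id [NS o (i + 1)]).tensor (MDiag.id (Nsl st))) :=
    by exact (MEqC.id_tensor_id (P := ContourPoly G) [NS o (i + 1)] (Nsl st)).symm
  refine MEqC.trans (MEqC.tensor e1 (MEqC.tensor (MEqC.refl d) e2)) ?_
  -- (M ⊗ m) ⊗ (d ⊗ (n ⊗ N)) ~ M ⊗ ((m ⊗ (d ⊗ n)) ⊗ N)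
  refine MEqC.trans (MEqC.tensor_assoc _ _ _) ?_
  refine MEqC.tensor (MEqC.refl _) ?_
  -- m ⊗ (d ⊗ (n ⊗ N)) ~ (m ⊗ (d ⊗ n)) ⊗ N
  refine MEqC.trans ?_ (MEqC.tensor_assoc _ _ _).symm
  refine MEqC.tensor (MEqC.refl _) ?_
  exact (MEqC.tensor_assoc _ _ _).symm

/-- A generator layered in a stack context. -/
theorem whisker_layer (st : VStack G S X) {A B : List (CSort G)}
    (f : (ContourPoly G).Gen A B) :
    MEqC (layer (Msl st) (Nsl st) f) (whisker st (.gen f)) :=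
  (layer_eqc _ _ f).trans (whisker_eqc st _).symm


variable {G : Mgraph} {S : G.V}

/-- Both sides of an equation of words with a unique left-polarized element and
inr-only contexts on one side decompose identically. -/
theorem uniq {α β : Type _} {a c : α} {B D : List (α ⊕ β)} :
    ∀ {A C : List (α ⊕ β)}, (∀ x ∈ C, ∃ y, x = Sum.inr y) → (∀ x ∈ D, ∃ y, x = Sum.inr y) →
    A ++ Sum.inl a :: B = C ++ Sum.inl c :: D → A = C ∧ a = c ∧ B = D := by
  intro A
  induction A with
  | nil =>
    intro C hC hD h
    cases C with
    | nil => simp_all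
    | cons x C' =>
      simp only [List.nil_append, List.cons_append, List.cons.injEq] at h
      obtain ⟨y, hy⟩ := hC x (by simp)
      rw [← h.1] at hy
      exact absurd hy (by simp)
  | cons x A' ih =>
    intro C hC hD h
    cases C with
    | nil =>
      simp only [List.nil_append, List.cons_append, List.cons.injEq] at h
      have : Sum.inl a ∈ D := by rw [← h.2]; simp
      obtain ⟨y, hy⟩ := hD _ this
      exact absurd hy (by simp)
    | cons z C' =>
      simp only [List.cons_append, List.cons.injEq] at h
      obtain ⟨h1, h2, h3⟩ := ih (fun x hx => hC x (by simp [hx])) hD h.2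
      exact ⟨by rw [h.1, h1], h2, h3⟩

theorem word_eq {X : G.V} (st : VStack G S X) (b : Bool) :
    word st b = Msl st ++ LS X b :: Nsl st := by
  simp [word]

theorem append_single_inj {α} {A B : List α} {x y : α} (h : A ++ [x] = B ++ [y]) :
    A = B ∧ x = y := by
  have := List.append_inj' h (by simp)
  simpa using this

theorem word_match_zero {X Y : G.V} {bx bb : Bool} (st : VStack G S X)
    {L R : List (CSort G)} (h : word st bx = L ++ [LS Y bb] ++ R) :
    L = Msl st ∧ Y = X ∧ bb = bx ∧ R = Nsl st := by
  rw [word_eq] at h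
  have h' : L ++ LS Y bb :: R = Msl st ++ LS X bx :: Nsl st := by
    simpa [List.append_assoc] using h.symm
  simp only [LS] at h'
  obtain ⟨h1, h2, h3⟩ := uniq (Msl_inr st) (Nsl_inr st) h'
  rw [Prod.mk.injEq] at h2
  exact ⟨h1, h2.1, h2.2, h3⟩

theorem word_match_pos {X v : G.V} {bx bb : Bool} (st : VStack G S X) {o : Opn G} {j : ℕ}
    {L R : List (CSort G)} (h : word st bx = L ++ [MS o j, LS v bb, NS o j] ++ R) :
    L ++ [MS o j] = Msl st ∧ v = X ∧ bb = bx ∧ NS o j :: R = Nsl st := by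
  rw [word_eq] at h
  have h' : (L ++ [MS o j]) ++ LS v bb :: (NS o j :: R)
      = Msl st ++ LS X bx :: Nsl st := by
    simpa [List.append_assoc] using h.symm
  simp only [LS] at h'
  obtain ⟨h1, h2, h3⟩ := uniq (Msl_inr st) (Nsl_inr st) h'
  rw [Prod.mk.injEq] at h2
  exact ⟨h1, h2.1, h2.2, h3⟩

def castDL {l l' : List G.V} (h : l = l') (ds : MDerivList G l) : MDerivList G l' := h ▸ ds

theorem go_cast (o : Opn G) (i : ℕ) (hi : i ≤ o.1.length) {rem rem' : List G.V}
    (hr : rem = rem') (ds : MDerivList G rem) (h : o.1.drop i = rem') :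
    go o i hi (castDL hr ds) h = go o i hi ds (h.trans hr.symm) := by
  subst hr; rfl

theorem go_cast_eqc (o : Opn G) (i : ℕ) (hi : i ≤ o.1.length) {rem rem' : List G.V}
    (hr : rem = rem') (ds : MDerivList G rem) (h : o.1.drop i = rem') :
    MEqC (go o i hi (castDL hr ds) h) (go o i hi ds (h.trans hr.symm)) := by
  subst hr; exact MEqC.refl _

/-- The inner unfolding of `go` on a cons, in `MEqC` form. -/
theorem go_cons_eqc (o : Opn G) (i : ℕ) (hi : i ≤ o.1.length) {v : G.V} {rem' : List G.V}
    (d : MDeriv G v) (ds' : MDerivList G rem') (h : o.1.drop i = v :: rem')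
    (hlt : i < o.1.length) (h' : o.1.drop (i + 1) = rem')
    (e1 : [MS o (i + 1)] ++ ([LS v false] ++ [NS o (i + 1)])
      = ctgt o ⟨i, Nat.lt_succ_of_le hi⟩)
    (e2 : [MS o (i + 1)] ++ ([LS v true] ++ [NS o (i + 1)])
      = csrc o ⟨i + 1, by omega⟩) :
    MEqC (go o i hi (.cons d ds') h)
      ((MDiag.gen (gsec o i hi)).comp
        ((((MDiag.id [MS o (i + 1)]).tensor
            ((CD d).tensor (MDiag.id [NS o (i + 1)]))).castD e1 e2).comp
          (go o (i + 1) hlt ds' h'))) := by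
  rw [go]
  exact MEqC.refl _

theorem go_nil_eqc (o : Opn G) (i : ℕ) (hi : i ≤ o.1.length) (h : o.1.drop i = []) :
    MEqC (go o i hi .nil h) (MDiag.gen (gsec o i hi)) := by
  rw [go]
  exact MEqC.comp_cast_id _ _

theorem CD_eqc {l : List G.V} {Y : G.V} (g : G.Op l Y) (ds : MDerivList G l) :
    MEqC (CD (.node g ds)) (go ⟨l, Y, g⟩ 0 (Nat.zero_le _) ds rfl) := by
  rw [CD]
  exact MEqC.cast_left _ _ _

/-- The canonical continuation property for sequences out of a `true`-polarized state. -/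
def PopSpec : {X : G.V} → (st : VStack G S X) →
    Seq (ContourPoly G) (word st true) [LS S true] → Prop
  | _, .nil, s => MEqC s.toDiag (MDiag.id (P := ContourPoly G) [LS S true])
  | _, .cons o i hi _ st', s =>
      ∃ (rem : List G.V) (hrem : o.1.drop (i + 1) = rem) (ds : MDerivList G rem)
        (s' : Seq (ContourPoly G) (word st' true) [LS S true]),
        s'.length < s.length ∧
        MEqC s.toDiag ((whisker st' (go o (i + 1) hi ds hrem)).comp s'.toDiag)

theorem main_induction (k : ℕ) :
    (∀ {X : G.V} (st : VStack G S X)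
      (s : Seq (ContourPoly G) (word st false) [LS S true]),
      s.length ≤ k →
      ∃ (d : MDeriv G X)
        (s' : Seq (ContourPoly G) (word st true) [LS S true]),
        s'.length < s.length ∧
        MEqC s.toDiag ((whisker st (CD d)).comp s'.toDiag)) ∧
    (∀ {X : G.V} (st : VStack G S X)
      (s : Seq (ContourPoly G) (word st true) [LS S true]),
      s.length ≤ k → PopSpec st s) := by
  induction k using Nat.strong_induction_on with
  | _ k IH =>
  constructor
  · -- the `false`-polarity statement
    intro X st s hk
    rcases Seq.cases_eq s with ⟨hW, -, -⟩ | ⟨A', B', L, R, f, rest, h, hlen, meq⟩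
    · -- a `false`-polarized word is never final
      exfalso
      have h' : word st false = [] ++ [LS S true] ++ [] := by
        rw [List.nil_append, List.append_nil]; exact hW
      simpa using (word_match_zero st h').2.2.1
    · obtain ⟨o, ⟨j, hj⟩, hA, hB⟩ := f
      subst hA; subst hB
      rcases Nat.eq_zero_or_pos j with hj0 | hjpos
      · -- a sector `0` fires at the focus
        subst hj0
        rw [csrc_zero o hj] at h
        obtain ⟨hL, hXo, -, hR⟩ := word_match_zero st h
        subst hL; subst hR; subst hXo
        have meq' : MEqC s.toDiag
            ((layer (Msl st) (Nsl st) (gsec o 0 (Nat.zero_le _))).comp rest.toDiag) := meq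
        by_cases hn : o.1.length = 0
        · -- nullary operation: focus completes immediately
          have wcast : Msl st ++ ctgt o ⟨0, hj⟩ ++ Nsl st = word st true := by
            rw [ctgt_last o 0 hn.symm]; rfl
          refine ⟨.node o.2.2 (castDL (List.length_eq_zero_iff.mp hn).symm .nil),
            rest.castS wcast,
              lt_of_le_of_lt (le_of_eq (Seq.length_castS _ _))
                (lt_of_lt_of_eq (Nat.lt_succ_self _) hlen.symm), ?_⟩
          have c1 : MEqC (CD (.node o.2.2 (castDL (List.length_eq_zero_iff.mp hn).symm
              (MDerivList.nil (G := G)))))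
              (go o 0 (Nat.zero_le _) (castDL (List.length_eq_zero_iff.mp hn).symm .nil) rfl) :=
            CD_eqc o.2.2 _
          replace c1 := c1.trans (go_cast_eqc _ _ _ _ _ _)
          have c2 : MEqC (CD (.node o.2.2 (castDL (List.length_eq_zero_iff.mp hn).symm
              (MDerivList.nil (G := G))))) (MDiag.gen (gsec o 0 (Nat.zero_le _))) :=
            c1.trans (go_nil_eqc o 0 (Nat.zero_le _) _)
          refine meq'.trans (MEqC.comp ((whisker_layer st _).trans
            (whisker_congr st c2.symm)) (Seq.toDiag_castS wcast rest).symm)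
        · -- the focus starts a subderivation
          have h0 : 0 < o.1.length := Nat.pos_of_ne_zero hn
          have wcast : Msl st ++ ctgt o ⟨0, hj⟩ ++ Nsl st
              = word (VStack.cons o 0 h0 rfl st) false := by
            rw [ctgt_lt o 0 h0]; simp [word, Msl, Nsl, List.append_assoc]
          have hrk : rest.length < k := by omega
          obtain ⟨d₀, s₁, hl1, e₁⟩ := (IH rest.length hrk).1
            (VStack.cons o 0 h0 rfl st) (rest.castS wcast) (le_of_eq (Seq.length_castS _ _))
          have hs1k : s₁.length < k :=
            lt_trans (lt_of_lt_of_eq hl1 (Seq.length_castS _ _)) hrk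
          have hps := (IH s₁.length hs1k).2 (VStack.cons o 0 h0 rfl st) s₁ (le_refl _)
          obtain ⟨rem, hrem, ds, s₂, hl2, e₂⟩ := hps
          have hfull : (o.1.get ⟨0, h0⟩) :: rem = o.1 := by
            have h1 := List.drop_eq_getElem_cons (l := o.1) h0
            rw [List.drop_zero] at h1
            rw [List.get_eq_getElem, ← hrem]
            exact h1.symm
          refine ⟨.node o.2.2 (castDL hfull (.cons d₀ ds)), s₂, ?_, ?_⟩
          · exact lt_trans hl2 (lt_trans (lt_of_lt_of_eq hl1 (Seq.length_castS _ _))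
              (lt_of_lt_of_eq (Nat.lt_succ_self _) hlen.symm))
          · -- diagram equality
            have c1 : MEqC (CD (.node o.2.2 (castDL hfull (.cons d₀ ds))))
                (go o 0 (Nat.zero_le _) (castDL hfull (.cons d₀ ds)) rfl) :=
              CD_eqc o.2.2 _
            replace c1 := c1.trans (go_cast_eqc _ _ _ _ _ _)
            have e1' : [MS o 1] ++ ([LS (o.1.get ⟨0, h0⟩) false] ++ [NS o 1])
                = ctgt o ⟨0, Nat.lt_succ_of_le (Nat.zero_le _)⟩ := by
              rw [ctgt_lt o 0 h0]; rfl
            have e2' : [MS o 1] ++ ([LS (o.1.get ⟨0, h0⟩) true] ++ [NS o 1])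
                = csrc o ⟨1, by omega⟩ := by
              rw [csrc_pos o 1 one_ne_zero (by omega)]; rfl
            have c2 := go_cons_eqc o 0 (Nat.zero_le _) d₀ ds
              (rfl.trans hfull.symm) h0 hrem e1' e2'
            set mid := (MDiag.id [MS o 1]).tensor
              ((CD d₀).tensor (MDiag.id [NS o 1])) with hmid
            set cmid := mid.castD e1' e2' with hcmid
            have cdfull : MEqC (CD (.node o.2.2 (castDL hfull (.cons d₀ ds))))
                ((MDiag.gen (gsec o 0 (Nat.zero_le _))).comp
                  (cmid.comp (go o 1 h0 ds hrem))) :=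
              c1.trans c2
            -- forward chain
            have f1 : MEqC s.toDiag ((whisker st (MDiag.gen (gsec o 0 (Nat.zero_le _)))).comp
                ((whisker st cmid).comp ((whisker st (go o 1 h0 ds hrem)).comp
                  s₂.toDiag))) := by
              refine meq'.trans (MEqC.comp (whisker_layer st _) ?_)
              refine ((Seq.toDiag_castS wcast rest).symm.trans e₁).trans ?_
              refine MEqC.comp (((whisker_cons o 0 h0 rfl st (CD d₀)).trans
                (by exact MEqC.refl _)).trans
                  (whisker_congr st (MEqC.cast_right e1' e2' mid))) e₂
            refine f1.trans ?_
            refine MEqC.trans ?_ (MEqC.comp ((whisker_congr st cdfull).trans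
              ((whisker_comp st _ _).trans (MEqC.comp (MEqC.refl _)
                (whisker_comp st _ _)))).symm (MEqC.refl s₂.toDiag))
            exact ((MEqC.comp_assoc _ _ _).trans
              (MEqC.comp (MEqC.refl _) (MEqC.comp_assoc _ _ _))).symm
      · -- sectors `j ≥ 1` need a `true`-polarized focus: contradiction
        exfalso
        rw [csrc_pos o j (by omega) hj] at h
        simpa using (word_match_pos st h).2.2.1
  · intro X st s hk
    cases st with
    | nil =>
      rcases Seq.cases_eq s with ⟨hW, -, hid⟩ | ⟨A', B', L, R, f, rest, h, hlen, meq⟩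
      · exact hid.trans (by exact MEqC.refl _)
      · exfalso
        obtain ⟨o, ⟨j, hj⟩, hA, hB⟩ := f
        subst hA; subst hB
        rcases Nat.eq_zero_or_pos j with hj0 | hjpos
        · subst hj0
          rw [csrc_zero o hj] at h
          simpa using (word_match_zero VStack.nil h).2.2.1
        · rw [csrc_pos o j (by omega) hj] at h
          exact List.append_ne_nil_of_right_ne_nil L (List.cons_ne_nil _ _)
              (word_match_pos VStack.nil h).1
    | cons o₂ i hi hX st' =>
      rcases Seq.cases_eq s with ⟨hW, -, -⟩ | ⟨A', B', L, R, f, rest, h, hlen, meq⟩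
      · exfalso
        have h' : word (VStack.cons o₂ i hi hX st') true = [] ++ [LS S true] ++ [] := by
          rw [List.nil_append, List.append_nil]; exact hW
        simpa [Msl] using ((word_match_zero _ h').1)
      · obtain ⟨o, ⟨j, hj⟩, hA, hB⟩ := f
        subst hA; subst hB
        rcases Nat.eq_zero_or_pos j with hj0 | hjpos
        · exfalso
          subst hj0
          rw [csrc_zero o hj] at h
          simpa using (word_match_zero _ h).2.2.1
        · rw [csrc_pos o j (by omega) hj] at h
          obtain ⟨hL2, hv, -, hR2⟩ := word_match_pos (VStack.cons o₂ i hi hX st') h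
          rw [show Msl (VStack.cons o₂ i hi hX st') = Msl st' ++ [MS o₂ (i + 1)]
            from rfl] at hL2
          obtain ⟨hL, hMS⟩ := append_single_inj hL2
          have hMS0 : (Sum.inr (o, j, false) :
              (G.V × Bool) ⊕ (((l : List G.V) × (Y : G.V) × G.Op l Y) × ℕ × Bool))
              = Sum.inr (o₂, i + 1, false) := hMS
          obtain ⟨ho, hjj, -⟩ : o = o₂ ∧ j = i + 1 ∧ True := by
            have := hMS0
            simp only [Sum.inr.injEq, Prod.mk.injEq] at this
            exact ⟨this.1, this.2.1, trivial⟩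
          subst ho; subst hjj
          have hR : R = Nsl st' := by
            rw [show Nsl (VStack.cons o i hi hX st') = NS o (i + 1) :: Nsl st'
              from rfl] at hR2
            exact ((List.cons.injEq _ _ _ _).mp hR2).2
          subst hL; subst hR
          by_cases hn : i + 1 = o.1.length
          · -- last sector: pop the frame
            have hrem : o.1.drop (i + 1) = [] := by rw [hn]; exact List.drop_length
            have wcast : Msl st' ++ ctgt o ⟨i + 1, hj⟩ ++ Nsl st' = word st' true := by
              rw [ctgt_last o (i + 1) hn]; rfl
            refine ⟨[], hrem, .nil, rest.castS wcast,
              lt_of_le_of_lt (le_of_eq (Seq.length_castS _ _))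
                (lt_of_lt_of_eq (Nat.lt_succ_self _) hlen.symm), ?_⟩
            refine meq.trans (MEqC.comp ((whisker_layer st' _).trans
              ((whisker_congr st' (go_nil_eqc o (i + 1) hi hrem).symm)))
              (Seq.toDiag_castS wcast rest).symm)
          · -- middle sector: start the next subderivation
            have hlt2 : i + 1 < o.1.length := by omega
            have wcast : Msl st' ++ ctgt o ⟨i + 1, hj⟩ ++ Nsl st'
                = word (VStack.cons o (i + 1) hlt2 rfl st') false := by
              rw [ctgt_lt o (i + 1) hlt2]; simp [word, Msl, Nsl, List.append_assoc]
            have hrk : rest.length < k := by omega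
            obtain ⟨d₁, s₁, hl1, e₁⟩ := (IH rest.length hrk).1
              (VStack.cons o (i + 1) hlt2 rfl st') (rest.castS wcast) (le_of_eq (Seq.length_castS _ _))
            have hs1k : s₁.length < k :=
              lt_trans (lt_of_lt_of_eq hl1 (Seq.length_castS _ _)) hrk
            obtain ⟨rem₂, hrem₂, ds₂, s₂, hl2, e₂⟩ :=
              (IH s₁.length hs1k).2 (VStack.cons o (i + 1) hlt2 rfl st') s₁ (le_refl _)
            have hrem : o.1.drop (i + 1) = o.1.get ⟨i + 1, hlt2⟩ :: rem₂ := by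
              rw [List.get_eq_getElem, ← hrem₂]
              exact List.drop_eq_getElem_cons hlt2
            refine ⟨_, hrem, .cons d₁ ds₂, s₂, ?_, ?_⟩
            · exact lt_trans hl2 (lt_trans (lt_of_lt_of_eq hl1 (Seq.length_castS _ _))
              (lt_of_lt_of_eq (Nat.lt_succ_self _) hlen.symm))
            · have e1' : [MS o (i + 1 + 1)] ++ ([LS (o.1.get ⟨i + 1, hlt2⟩) false]
                  ++ [NS o (i + 1 + 1)]) = ctgt o ⟨i + 1, Nat.lt_succ_of_le hi⟩ := by
                rw [ctgt_lt o (i + 1) hlt2]; rfl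
              have e2' : [MS o (i + 1 + 1)] ++ ([LS (o.1.get ⟨i + 1, hlt2⟩) true]
                  ++ [NS o (i + 1 + 1)]) = csrc o ⟨i + 1 + 1, by omega⟩ := by
                rw [csrc_pos o (i + 1 + 1) (by omega) (by omega)]; rfl
              have c2 := go_cons_eqc o (i + 1) hi d₁ ds₂ hrem hlt2 hrem₂ e1' e2'
              set mid := (MDiag.id [MS o (i + 1 + 1)]).tensor
                ((CD d₁).tensor (MDiag.id [NS o (i + 1 + 1)])) with hmid
              set cmid := mid.castD e1' e2' with hcmid
              have f1 : MEqC s.toDiag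
                  ((whisker st' (MDiag.gen (gsec o (i + 1) hi))).comp
                    ((whisker st' cmid).comp
                      ((whisker st' (go o (i + 1 + 1) hlt2 ds₂ hrem₂)).comp
                        s₂.toDiag))) := by
                refine meq.trans (MEqC.comp (whisker_layer st' _) ?_)
                refine ((Seq.toDiag_castS wcast rest).symm.trans e₁).trans ?_
                refine MEqC.comp (((whisker_cons o (i + 1) hlt2 rfl st' (CD d₁)).trans
                  (by exact MEqC.refl _)).trans
                    (whisker_congr st' (MEqC.cast_right e1' e2' mid))) e₂
              refine f1.trans ?_
              refine MEqC.trans ?_ (MEqC.comp ((whisker_congr st' c2).trans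
                ((whisker_comp st' _ _).trans (MEqC.comp (MEqC.refl _)
                  (whisker_comp st' _ _)))).symm (MEqC.refl s₂.toDiag))
              exact ((MEqC.comp_assoc _ _ _).trans
                (MEqC.comp (MEqC.refl _) (MEqC.comp_assoc _ _ _))).symm


variable {G : Mgraph} {S : G.V}

/-- Every closed diagram on the contour polygraph is the contour of a derivation. -/
theorem final (e : MDiag (ContourPoly G) [Sum.inl (S, false)] [Sum.inl (S, true)]) :
    ∃ d : MDeriv G S, MEq (ContourPoly G) e (CD d) := by
  obtain ⟨s, hs⟩ := sequentialize e
  obtain ⟨d, s₂, -, e₁⟩ := (main_induction (S := S) s.length).1 (X := S) VStack.nil s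
    (le_refl _)
  have hps := (main_induction (S := S) s₂.length).2 VStack.nil s₂ (le_refl _)
  refine ⟨d, MEqC.to_meq ?_⟩
  have c0 : MEqC e s.toDiag := MEqC.of_meq hs
  have cw : MEqC (whisker (VStack.nil : VStack G S S) (CD d)) (CD d) := by
    refine (whisker_eqc _ _).trans ?_
    refine MEqC.trans (by exact MEqC.tensor_nil_left ((CD d).tensor
      (MDiag.id (P := ContourPoly G) []))) ?_
    exact MEqC.tensor_nil_right (CD d)
  exact ((c0.trans e₁).trans (MEqC.comp cw hps)).trans (MEqC.comp_id (CD d))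

/-! ### Token semantics -/

/-- Token sets carried by the wires of the contour polygraph. -/
def Tok : CSort G → Type
  | .inl (X, true) => MDeriv G X
  | .inl (_, false) => PUnit
  | .inr (o, i, false) => MDerivList G (o.1.take (i - 1))
  | .inr (_, _, true) => PUnit

def Toks : List (CSort G) → Type
  | [] => PUnit
  | x :: l => Tok x × Toks l

def castTok {A B : List (CSort G)} (h : A = B) (t : Toks A) : Toks B := h ▸ t

@[simp] theorem castTok_rfl {A : List (CSort G)} (t : Toks A) : castTok rfl t = t := rfl

@[simp] theorem castTok_self {A : List (CSort G)} (h : A = A) (t : Toks A) :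
    castTok h t = t := rfl

theorem castTok_castTok {A B C : List (CSort G)} (h1 : A = B) (h2 : B = C) (t : Toks A) :
    castTok h2 (castTok h1 t) = castTok (h1.trans h2) t := by subst h1; subst h2; rfl

def splitl : {A B : List (CSort G)} → Toks (A ++ B) → Toks A
  | [], _, _ => PUnit.unit
  | _ :: A', B, t => (t.1, splitl (A := A') (B := B) t.2)

def splitr : {A B : List (CSort G)} → Toks (A ++ B) → Toks B
  | [], _, t => t
  | _ :: A', B, t => splitr (A := A') (B := B) t.2

def joinT : {A B : List (CSort G)} → Toks A → Toks B → Toks (A ++ B)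
  | [], _, _, u => u
  | _ :: A', B, t, u => (t.1, joinT (A := A') (B := B) t.2 u)

@[simp] theorem splitl_join {A B : List (CSort G)} (t : Toks A) (u : Toks B) :
    splitl (joinT t u) = t := by
  induction A with
  | nil => rfl
  | cons x A' ih => exact Prod.ext rfl (ih t.2)

@[simp] theorem splitr_join {A B : List (CSort G)} (t : Toks A) (u : Toks B) :
    splitr (joinT t u) = u := by
  induction A with
  | nil => rfl
  | cons x A' ih => exact ih t.2

@[simp] theorem join_split {A B : List (CSort G)} (t : Toks (A ++ B)) :
    joinT (splitl t) (splitr t) = t := by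
  induction A with
  | nil => rfl
  | cons x A' ih => exact Prod.ext rfl (ih t.2)

theorem castTok_cons {x : CSort G} {L L' : List (CSort G)} (h : L = L')
    (a : Tok x) (t : Toks L) :
    castTok (show x :: L = x :: L' by rw [h]) ((a, t) : Toks (x :: L))
      = ((a, castTok h t) : Toks (x :: L')) := by
  subst h; rfl

theorem join_cast {A B C : List (CSort G)} (x : Toks A) (y : Toks B) (z : Toks C) :
    castTok (List.append_assoc A B C) (joinT (joinT x y) z) = joinT x (joinT y z) := by
  induction A with
  | nil => rfl
  | cons a A' ih =>
    exact (castTok_cons (List.append_assoc A' B C) x.1 (joinT (joinT x.2 y) z)).trans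
      (congrArg (fun w => ((x.1, w) : Toks (a :: (A' ++ (B ++ C))))) (ih x.2))

theorem join_nil {A : List (CSort G)} (x : Toks A) (u : Toks ([] : List (CSort G))) :
    castTok (List.append_nil A) (joinT x u) = x := by
  induction A with
  | nil => rfl
  | cons a A' ih =>
    exact (castTok_cons (List.append_nil A') x.1 (joinT x.2 u)).trans
      (congrArg (fun w => ((x.1, w) : Toks (a :: A'))) (ih x.2))

theorem cast_inj {A B : List (CSort G)} (h : A = B) (t : Toks A) (u : Toks B)
    (he : castTok h t = u) : t = castTok h.symm u := by subst h; simpa using he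

/-! Evaluation of generators. -/

def MDerivList.snoc : {l : List G.V} → {v : G.V} → MDerivList G l → MDeriv G v →
    MDerivList G (l ++ [v])
  | _, _, .nil, d => .cons d .nil
  | _, _, .cons d0 ds, d => .cons d0 (MDerivList.snoc ds d)

def MDerivList.append : {l l' : List G.V} → MDerivList G l → MDerivList G l' →
    MDerivList G (l ++ l')
  | _, _, .nil, u => u
  | _, _, .cons d ds, u => .cons d (MDerivList.append ds u)

/-- The derivation list accumulated on the `M`-wire entering sector `j`,
together with the new derivation on the focus wire. -/
def accSrc (o : Opn G) (j : ℕ) (hj : j < o.1.length + 1)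
    (t : Toks (csrc o ⟨j, hj⟩)) : MDerivList G (o.1.take j) :=
  if h0 : j = 0 then castDL (by subst h0; exact List.take_zero.symm) .nil
  else
    let t' := castTok (csrc_pos o j h0 hj) t
    castDL
      (by
        have h2 := List.take_concat_get' o.1 (j - 1) (by omega)
        rwa [show j - 1 + 1 = j by omega] at h2)
      (MDerivList.snoc t'.1 t'.2.1)

def evalSec (o : Opn G) (j : ℕ) (hj : j < o.1.length + 1)
    (t : Toks (csrc o ⟨j, hj⟩)) : Toks (ctgt o ⟨j, hj⟩) :=
  if hn : j = o.1.length then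
    castTok (ctgt_last o j hn hj).symm
      ⟨.node o.2.2 (castDL (by rw [hn, List.take_length]) (accSrc o j hj t)), PUnit.unit⟩
  else
    castTok (ctgt_lt o j (by omega) hj).symm
      ⟨accSrc o j hj t, PUnit.unit, PUnit.unit, PUnit.unit⟩

def evalGen : {A B : List (CSort G)} → (ContourPoly G).Gen A B → Toks A → Toks B
  | _, _, ⟨o, ⟨j, hj⟩, hA, hB⟩, t =>
      castTok hB.symm (evalSec o j hj (castTok hA t))

def evalD : {A B : List (CSort G)} → MDiag (ContourPoly G) A B → Toks A → Toks B
  | _, _, .id _ => fun t => t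
  | _, _, .gen f => evalGen f
  | _, _, .comp a b => fun t => evalD b (evalD a t)
  | _, _, .tensor a b => fun t => joinT (evalD a (splitl t)) (evalD b (splitr t))

theorem evalD_castD {A B A' B' : List (CSort G)} (h1 : A = A') (h2 : B = B')
    (d : MDiag (ContourPoly G) A B) (t : Toks A') :
    evalD (d.castD h1 h2) t = castTok h2 (evalD d (castTok h1.symm t)) := by
  subst h1; subst h2; rfl

theorem split_cast₁ {A C E : List (CSort G)} (t : Toks (A ++ (C ++ E))) :
    splitl (castTok (List.append_assoc A C E).symm t)
      = joinT (splitl t) (splitl (splitr t)) := by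
  have h := join_cast (splitl t) (splitl (splitr t)) (splitr (splitr t))
  rw [join_split, join_split] at h
  rw [← cast_inj _ _ _ h, splitl_join]

theorem split_cast₂ {A C E : List (CSort G)} (t : Toks (A ++ (C ++ E))) :
    splitr (castTok (List.append_assoc A C E).symm t) = splitr (splitr t) := by
  have h := join_cast (splitl t) (splitl (splitr t)) (splitr (splitr t))
  rw [join_split, join_split] at h
  rw [← cast_inj _ _ _ h, splitr_join]

/-- Soundness: evaluation is invariant under the monoidal equations. -/
theorem evalD_sound {A B : List (ContourPoly G).S} {d e : MDiag (ContourPoly G) A B}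
    (h : MEq (ContourPoly G) d e) : evalD d = evalD e := by
  induction h with
  | refl d => rfl
  | symm _ ih => exact ih.symm
  | trans _ _ ih1 ih2 => exact ih1.trans ih2
  | comp_congr _ _ ih1 ih2 => funext t; simp [evalD, ih1, ih2]
  | tensor_congr _ _ ih1 ih2 => funext t; simp [evalD, ih1, ih2]; rfl
  | comp_assoc a b c => rfl
  | id_comp a => rfl
  | comp_id a => rfl
  | tensor_assoc a b c =>
    funext t
    erw [evalD_castD]
    show castTok _ (joinT (joinT _ _) _) = joinT _ (joinT _ _)
    erw [join_cast, split_cast₁, split_cast₂, splitl_join, splitr_join]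
    rfl
  | tensor_nil_left a => funext t; rfl
  | tensor_nil_right a =>
    rename_i A B
    funext t
    have h3 : splitl (castTok (List.append_nil A).symm t) = t := by
      have h4 := join_nil (splitl (castTok (List.append_nil A).symm t))
        (splitr (A := A) (castTok (List.append_nil A).symm t))
      erw [join_split, castTok_castTok] at h4
      exact h4.symm.trans (castTok_self _ t)
    erw [evalD_castD]
    show castTok _ (joinT _ _) = _
    erw [join_nil, h3]
  | id_tensor_id X Y => funext t; exact join_split t
  | interchange a b c d =>
    funext t
    show joinT (evalD b (evalD a _)) (evalD d (evalD c _))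
      = joinT (evalD b (splitl (joinT _ _))) (evalD d (splitr (joinT _ _)))
    erw [splitl_join, splitr_join]


variable {G : Mgraph}

@[simp] theorem castDL_rfl {l : List G.V} (x : MDerivList G l) : castDL rfl x = x := rfl

theorem castDL_congr {l₁ l₂ l : List G.V} (p1 : l₁ = l) (p2 : l₂ = l)
    {x : MDerivList G l₁} {y : MDerivList G l₂} (hxy : HEq x y) :
    castDL p1 x = castDL p2 y := by
  subst p1; subst p2; rw [eq_of_heq hxy]

theorem castDL_heq {l l' : List G.V} (h : l = l') (x : MDerivList G l) :
    HEq (castDL h x) x := by subst h; rfl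

theorem castDL_eq_of_heq {l₁ l : List G.V} (p : l₁ = l) {x : MDerivList G l₁}
    {y : MDerivList G l} (hxy : HEq x y) : castDL p x = y := by
  subst p; exact eq_of_heq hxy

theorem heq_cons {v : G.V} {l₁ l₂ : List G.V} (h : l₁ = l₂) (d : MDeriv G v)
    {x : MDerivList G l₁} {y : MDerivList G l₂} (hxy : HEq x y) :
    HEq (MDerivList.cons d x) (MDerivList.cons d y) := by
  subst h; rw [eq_of_heq hxy]

theorem heq_append_left {l₁ l₂ l' : List G.V} (h : l₁ = l₂)
    {x : MDerivList G l₁} {y : MDerivList G l₂} (hxy : HEq x y) (z : MDerivList G l') :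
    HEq (MDerivList.append x z) (MDerivList.append y z) := by
  subst h; rw [eq_of_heq hxy]

theorem heq_snoc_append : ∀ {l v l'} (x : MDerivList G l) (d : MDeriv G v)
    (z : MDerivList G l'),
    HEq (MDerivList.append (MDerivList.snoc x d) z) (MDerivList.append x (.cons d z))
  | _, _, _, .nil, d, z => HEq.refl _
  | _, _, _, .cons d0 x', d, z =>
    heq_cons (by simp) d0 (heq_snoc_append x' d z)

theorem heq_append_nil : ∀ {l : List G.V} (x : MDerivList G l),
    HEq (MDerivList.append x .nil) x
  | _, .nil => HEq.refl _
  | _, .cons d0 x' => heq_cons (by simp) d0 (heq_append_nil x')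

theorem evalGen_gsec (o : Opn G) (i : ℕ) (hi : i ≤ o.1.length)
    (t : Toks (csrc o ⟨i, Nat.lt_succ_of_le hi⟩)) :
    evalGen (gsec o i hi) t = evalSec o i (Nat.lt_succ_of_le hi) t := by
  exact evalGen.eq_1 _ _ t o i (Nat.lt_succ_of_le hi) rfl rfl

mutual

theorem evalD_CD : ∀ {X : G.V} (dd : MDeriv G X) (t : Toks [LS X false]),
    evalD (CD dd) t = ⟨dd, PUnit.unit⟩
  | _, .node (l := l) g ds, t => by
    erw [CD, evalD_castD, evalD_go]
    simp only [castTok_rfl, castTok_self]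
    exact congrArg (fun z => (MDeriv.node g z, PUnit.unit))
      (castDL_eq_of_heq _ (HEq.refl _))
termination_by X dd t => sizeOf dd

theorem evalD_go (o : Opn G) : ∀ (i : ℕ) (hi : i ≤ o.1.length) {rem : List G.V}
    (ds : MDerivList G rem) (h : o.1.drop i = rem)
    (t : Toks (csrc o ⟨i, Nat.lt_succ_of_le hi⟩)),
    evalD (go o i hi ds h) t
      = ⟨.node o.2.2 (castDL (by rw [← h, List.take_append_drop])
          (MDerivList.append (accSrc o i (Nat.lt_succ_of_le hi) t) ds)), PUnit.unit⟩
  | i, hi, _, .nil, h, t => by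
    have hn : i = o.1.length := by
      have := List.drop_eq_nil_iff.mp h
      omega
    rw [go]
    simp only [evalD]
    erw [evalGen_gsec, evalSec, dif_pos hn, evalD_castD]
    simp only [evalD, castTok_rfl, castTok_castTok, castTok_self]
    erw [castTok_castTok, castTok_castTok, castTok_self]
    exact congrArg (fun z => (MDeriv.node o.2.2 z, PUnit.unit))
      (castDL_congr _ _ (heq_append_nil _).symm)
  | i, hi, _, .cons (v := v) (l := rem') d ds', h, t => by
    have hlt : i < o.1.length := by
      by_contra hc
      rw [List.drop_eq_nil_of_le (by omega)] at h
      exact (List.cons_ne_nil v rem') h.symm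
    have hd : o.1[i] :: o.1.drop (i + 1) = v :: rem' :=
      (List.drop_eq_getElem_cons hlt).symm.trans h
    have hv : o.1.get ⟨i, hlt⟩ = v := by
      rw [List.get_eq_getElem]; exact ((List.cons.injEq _ _ _ _).mp hd).1
    have h' : o.1.drop (i + 1) = rem' := ((List.cons.injEq _ _ _ _).mp hd).2
    have IHCD := fun (t0 : Toks [LS v false]) => evalD_CD d t0
    have IHgo := fun (t0 : Toks (csrc o ⟨i + 1, Nat.lt_succ_of_le hlt⟩)) =>
      evalD_go o (i + 1) hlt ds' h' t0
    subst hv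
    rw [go]
    simp only [evalD]
    erw [evalGen_gsec, evalSec, dif_neg (by omega : ¬ i = o.1.length), evalD_castD]
    simp only [evalD, castTok_rfl, castTok_castTok, castTok_self]
    erw [castTok_castTok, castTok_self]
    show evalD (go o (i + 1) hlt ds' h')
        ((accSrc o i (Nat.lt_succ_of_le hi) t,
          ((evalD (CD d) (PUnit.unit, PUnit.unit)).1, (PUnit.unit, PUnit.unit)))
          : Toks (csrc o ⟨i + 1, Nat.lt_succ_of_le hlt⟩)) = _
    erw [IHCD, IHgo]
    have hacc : HEq (accSrc o (i + 1) (Nat.lt_succ_of_le hlt)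
        ((accSrc o i (Nat.lt_succ_of_le hi) t, (d, (PUnit.unit, PUnit.unit)))
          : Toks (csrc o ⟨i + 1, Nat.lt_succ_of_le hlt⟩)))
        (MDerivList.snoc (accSrc o i (Nat.lt_succ_of_le hi) t) d) := by
      with_unfolding_all exact castDL_heq _ _
    refine congrArg (fun z => (MDeriv.node o.2.2 z, PUnit.unit)) ?_
    refine castDL_congr _ _ ?_
    refine HEq.trans (heq_append_left ((List.take_concat_get' o.1 i hlt).symm) hacc ds') ?_
    exact heq_snoc_append _ _ _
termination_by i hi rem ds h t => sizeOf ds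

end


end ContourProof

/-- For any multigraph `G`, derivations rooted at a sort `S` are in bijection with
the morphisms `S^L → S^R` of the free strict monoidal category over the optical
contour polygraph of `G`. -/
theorem derivations_equiv_contours (G : Mgraph) (S : G.V) :
    Nonempty
      (MDeriv G S ≃ FHom (ContourPoly G) [Sum.inl (S, false)] [Sum.inl (S, true)]) := by
  classical
  refine ⟨{
    toFun := fun d => Quot.mk _ (ContourProof.CD d)
    invFun := Quot.lift (fun e => (ContourProof.evalD e (PUnit.unit, PUnit.unit)).1)
      (fun a b h => by
        show (ContourProof.evalD a (PUnit.unit, PUnit.unit)).1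
          = (ContourProof.evalD b (PUnit.unit, PUnit.unit)).1
        rw [ContourProof.evalD_sound h])
    left_inv := fun d => by
      show (ContourProof.evalD (ContourProof.CD d) (PUnit.unit, PUnit.unit)).1 = d
      erw [ContourProof.evalD_CD]
    right_inv := fun q => ?_ }⟩
  induction q using Quot.ind with
  | _ e =>
    obtain ⟨d, hd⟩ := ContourProof.final e
    show Quot.mk _ (ContourProof.CD
      ((ContourProof.evalD e (PUnit.unit, PUnit.unit)).1)) = Quot.mk _ e
    erw [show ContourProof.evalD e = ContourProof.evalD (ContourProof.CD d)
      from ContourProof.evalD_sound hd, ContourProof.evalD_CD]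
    exact Quot.sound (MEq.symm hd)
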